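/- Let n ≥ 1, s ∈ (0,1), and u : ℝⁿ → ℝ with finite Gagliardo seminorm. If both the positive part u⁺ and the negative part u⁻ are nontrivial (i.e. each is nonzero on a set of positive measure), then the strict inequality [|u|]_s < [u]_s holds, where [v]_s² = ∬ |v(x)-v(y)|²/|x-y|^{n+2s} dx dy. -/
import Mathlib


open MeasureTheory

/-- Strict decrease of the Gagliardo seminorm under absolute value for genuinely
sign-changing functions: if both `u⁺` and `u⁻` are nontrivial then `[|u|]_s < [u]_s`. -/
theorem gagliardo_abs_lt (n : ℕ) (hn : 1 ≤ n) (s : ℝ) (hs : s ∈ Set.Ioo (0:ℝ) 1)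
    (u : EuclideanSpace ℝ (Fin n) → ℝ) (hmeas : Measurable u)
    (hfin : ∫⁻ p : EuclideanSpace ℝ (Fin n) × EuclideanSpace ℝ (Fin n),
        ENNReal.ofReal ((u p.1 - u p.2) ^ 2 / ‖p.1 - p.2‖ ^ ((n : ℝ) + 2 * s)) < ⊤)
    (hpos : 0 < volume {x | 0 < u x}) (hneg : 0 < volume {x | u x < 0}) :
    ∫⁻ p : EuclideanSpace ℝ (Fin n) × EuclideanSpace ℝ (Fin n),
        ENNReal.ofReal ((|u p.1| - |u p.2|) ^ 2 / ‖p.1 - p.2‖ ^ ((n : ℝ) + 2 * s))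
      < ∫⁻ p : EuclideanSpace ℝ (Fin n) × EuclideanSpace ℝ (Fin n),
          ENNReal.ofReal ((u p.1 - u p.2) ^ 2 / ‖p.1 - p.2‖ ^ ((n : ℝ) + 2 * s)) := by
  set g : EuclideanSpace ℝ (Fin n) × EuclideanSpace ℝ (Fin n) → ENNReal := fun p =>
    ENNReal.ofReal ((u p.1 - u p.2) ^ 2 / ‖p.1 - p.2‖ ^ ((n : ℝ) + 2 * s)) with hgdef
  set f : EuclideanSpace ℝ (Fin n) × EuclideanSpace ℝ (Fin n) → ENNReal := fun p =>
    ENNReal.ofReal ((|u p.1| - |u p.2|) ^ 2 / ‖p.1 - p.2‖ ^ ((n : ℝ) + 2 * s)) with hfdef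
  have hgm : Measurable g := by
    apply Measurable.ennreal_ofReal
    exact (((hmeas.comp measurable_fst).sub (hmeas.comp measurable_snd)).pow_const 2).div
      ((measurable_fst.sub measurable_snd).norm.pow_const _)
  -- the set where the strict inequality occurs
  set S : Set (EuclideanSpace ℝ (Fin n) × EuclideanSpace ℝ (Fin n)) := {p | 0 < u p.1 ∧ u p.2 < 0} with hSdef
  have hSpos : volume S ≠ 0 := by
    have : S = {x | 0 < u x} ×ˢ {x | u x < 0} := by
      ext p; simp [hSdef, Set.mem_prod]
    rw [this, Measure.volume_eq_prod, Measure.prod_prod]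
    exact (ENNReal.mul_pos hpos.ne' hneg.ne').ne'
  -- the diagonal is null
  have hdiag : volume {p : EuclideanSpace ℝ (Fin n) × EuclideanSpace ℝ (Fin n) | p.1 = p.2} = 0 := by
    have : Nonempty (Fin n) := Fin.pos_iff_nonempty.mp hn
    have hms : MeasurableSet {p : EuclideanSpace ℝ (Fin n) × EuclideanSpace ℝ (Fin n) | p.1 = p.2} :=
      isClosed_eq continuous_fst continuous_snd |>.measurableSet
    rw [Measure.volume_eq_prod, Measure.measure_prod_null hms]
    refine Filter.Eventually.of_forall fun x => ?_
    have : Prod.mk x ⁻¹' {p : EuclideanSpace ℝ (Fin n) × EuclideanSpace ℝ (Fin n) | p.1 = p.2} = {x} := by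
      ext y; simp [eq_comm]
    simp only [this]
    exact measure_singleton x
  have hle : f ≤ᵐ[volume] g := by
    refine Filter.Eventually.of_forall fun p => ?_
    apply ENNReal.ofReal_le_ofReal
    have hd : (0:ℝ) ≤ ‖p.1 - p.2‖ ^ ((n : ℝ) + 2 * s) := Real.rpow_nonneg (norm_nonneg _) _
    have key : (|u p.1| - |u p.2|) ^ 2 ≤ (u p.1 - u p.2) ^ 2 := by
      nlinarith [abs_abs_sub_abs_le_abs_sub (u p.1) (u p.2), sq_abs (u p.1 - u p.2),
        sq_abs (|u p.1| - |u p.2|), abs_nonneg (u p.1 - u p.2), abs_nonneg (|u p.1| - |u p.2|)]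
    exact div_le_div_of_nonneg_right key hd
  have hstrict : ∀ᵐ p : EuclideanSpace ℝ (Fin n) × EuclideanSpace ℝ (Fin n), p ∈ S → f p < g p := by
    have hae : ∀ᵐ p : EuclideanSpace ℝ (Fin n) × EuclideanSpace ℝ (Fin n), p.1 ≠ p.2 := by
      rw [ae_iff]; simpa using hdiag
    filter_upwards [hae] with p hne hp
    obtain ⟨h1, h2⟩ := hp
    have hd : (0:ℝ) < ‖p.1 - p.2‖ ^ ((n : ℝ) + 2 * s) :=
      Real.rpow_pos_of_pos (norm_pos_iff.mpr (sub_ne_zero.mpr hne)) _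
    have habs : |u p.1| = u p.1 := abs_of_pos h1
    have habs2 : |u p.2| = -u p.2 := abs_of_neg h2
    have hnum : (|u p.1| - |u p.2|) ^ 2 < (u p.1 - u p.2) ^ 2 := by
      rw [habs, habs2]; nlinarith
    have : (|u p.1| - |u p.2|) ^ 2 / ‖p.1 - p.2‖ ^ ((n : ℝ) + 2 * s)
        < (u p.1 - u p.2) ^ 2 / ‖p.1 - p.2‖ ^ ((n : ℝ) + 2 * s) :=
      div_lt_div_of_pos_right hnum hd
    exact (ENNReal.ofReal_lt_ofReal_iff ((div_nonneg (sq_nonneg _) hd.le).trans_lt this)).mpr this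
  exact lintegral_strict_mono_of_ae_le_of_ae_lt_on hgm.aemeasurable
    ((lintegral_mono_ae hle).trans_lt hfin).ne hle hSpos hstrict
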